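/- The number of monic integer polynomials P(t) of degree 2g all of whose complex roots have absolute value √p, and which satisfy the functional equation t^{2g} P(p/t) = p^g P(t), is at most ∏_{m=1}^{g} (2·C(2g,m)·p^{m/2} + 1), which is O_g(p^{g(g+1)/4}). -/

import Mathlib

open Polynomial in
lemma coeff_bound (p : ℕ) (g : ℕ) (P : Polynomial ℤ)
    (hmon : P.Monic) (hdeg : P.natDegree = 2 * g)
    (hroots : ∀ z : ℂ, (P.map (Int.castRingHom ℂ)).IsRoot z → ‖z‖ = Real.sqrt p)
    (m : ℕ) (hm : m ≤ 2 * g) :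
    |((P.coeff (2 * g - m) : ℤ) : ℝ)| ≤ (Nat.choose (2 * g) m : ℝ) * Real.sqrt p ^ m := by
  set Q := P.map (Int.castRingHom ℂ) with hQ
  have hQm : Q.Monic := hmon.map _
  have hQdeg : Q.natDegree = 2 * g := (hmon.natDegree_map _).trans hdeg
  have hsplit : Q.Splits := IsAlgClosed.splits Q
  have hcoeff : Q.coeff (2 * g - m) =
      Q.leadingCoeff * (-1) ^ (Q.natDegree - (2 * g - m)) *
        Q.roots.esymm (Q.natDegree - (2 * g - m)) :=
    Polynomial.coeff_eq_esymm_roots_of_splits hsplit (by omega)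
  have hsub : Q.natDegree - (2 * g - m) = m := by omega
  rw [hsub, hQm.leadingCoeff, one_mul] at hcoeff
  have habs : ‖Q.coeff (2 * g - m)‖ = ‖Q.roots.esymm m‖ := by
    rw [hcoeff, norm_mul, norm_pow, norm_neg, norm_one, one_pow, one_mul]
  have hesymm : ‖Q.roots.esymm m‖ ≤ (Nat.choose (2 * g) m : ℝ) * Real.sqrt p ^ m := by
    rw [Multiset.esymm]
    refine (norm_multiset_sum_le _).trans ?_
    have hb : ∀ x ∈ ((Q.roots.powersetCard m).map Multiset.prod).map norm,
        x ≤ Real.sqrt p ^ m := by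
      intro x hx
      rw [Multiset.map_map] at hx
      obtain ⟨t, ht, rfl⟩ := Multiset.mem_map.mp hx
      obtain ⟨hts, htc⟩ := (Multiset.mem_powersetCard).mp ht
      have hrep : t.map norm = Multiset.replicate m (Real.sqrt p) := by
        rw [Multiset.eq_replicate]
        constructor
        · rw [Multiset.card_map, htc]
        · intro b hb
          obtain ⟨z, hz, rfl⟩ := Multiset.mem_map.mp hb
          exact hroots z (Polynomial.isRoot_of_mem_roots (Multiset.mem_of_le hts hz))
      have : ‖(Multiset.prod t : ℂ)‖ = (t.map norm).prod := by
        exact map_multiset_prod (normHom : ℂ →*₀ ℝ) t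
      rw [Function.comp_apply, this, hrep, Multiset.prod_replicate]
    refine (Multiset.sum_le_card_nsmul _ _ hb).trans ?_
    rw [Multiset.card_map, Multiset.card_map, Multiset.card_powersetCard,
      (Polynomial.splits_iff_card_roots.mp hsplit), hQdeg, nsmul_eq_mul]
  have hQc : Q.coeff (2 * g - m) = ((P.coeff (2 * g - m) : ℤ) : ℂ) := by
    rw [hQ, Polynomial.coeff_map]; simp
  rw [hQc] at habs
  calc |((P.coeff (2*g-m):ℤ):ℝ)| = ‖((P.coeff (2*g-m) : ℤ) : ℂ)‖ := by
        rw [Complex.norm_intCast]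
    _ ≤ _ := habs ▸ hesymm

theorem stmt_3 (p : ℕ) (hp : p.Prime) (g : ℕ) (hg : 0 < g) :
    let S : Set (Polynomial ℤ) :=
      {P | P.Monic ∧ P.natDegree = 2 * g ∧
        (∀ z : ℂ, (P.map (Int.castRingHom ℂ)).IsRoot z → ‖z‖ = Real.sqrt p) ∧
        (∀ m : ℕ, m ≤ g → P.coeff m = (p : ℤ) ^ (g - m) * P.coeff (2 * g - m))}
    S.Finite ∧
      (S.ncard : ℝ) ≤ ∏ m ∈ Finset.Icc 1 g,
        (2 * (Nat.choose (2 * g) m : ℝ) * Real.sqrt p ^ m + 1) := by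
  intro S
  set B : ℕ → ℤ := fun m => ⌊(Nat.choose (2 * g) m : ℝ) * Real.sqrt p ^ m⌋ with hB
  set φ : Polynomial ℤ → (Fin g → ℤ) := fun P i => P.coeff (2 * g - (i + 1)) with hφ
  set T : Finset (Fin g → ℤ) :=
    Fintype.piFinset fun i : Fin g => Finset.Icc (-(B (i + 1))) (B (i + 1)) with hT
  have hBnn : ∀ m : ℕ, (0 : ℤ) ≤ B m := by
    intro m
    refine Int.floor_nonneg.mpr (mul_nonneg (by positivity) (by positivity))
  have hmaps : ∀ P ∈ S, φ P ∈ T := by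
    intro P hP
    obtain ⟨hPm, hPd, hPr, _⟩ := hP
    rw [hT, Fintype.mem_piFinset]
    intro i
    have hb := coeff_bound p g P hPm hPd hPr (i + 1) (by omega)
    rw [Finset.mem_Icc]
    obtain ⟨h1, h2⟩ := abs_le.mp hb
    exact ⟨neg_le.mp (Int.le_floor.mpr (by push_cast; linarith)),
      Int.le_floor.mpr h2⟩
  have hinj : Set.InjOn φ S := by
    intro P hP Q hQ h
    obtain ⟨hPm, hPd, _, hPf⟩ := hP
    obtain ⟨hQm, hQd, _, hQf⟩ := hQ
    have hco : ∀ k, g ≤ k → k < 2 * g → P.coeff k = Q.coeff k := by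
      intro k h1 h2
      have := congrFun h ⟨2 * g - k - 1, by omega⟩
      simp only [hφ] at this
      have hk : 2 * g - (2 * g - k - 1 + 1) = k := by omega
      rwa [hk] at this
    have hp1 : P.coeff (2 * g) = 1 := by rw [← hPd]; exact hPm.coeff_natDegree
    have hq1 : Q.coeff (2 * g) = 1 := by rw [← hQd]; exact hQm.coeff_natDegree
    have htop : P.coeff (2 * g) = Q.coeff (2 * g) := hp1.trans hq1.symm
    ext n
    rcases lt_trichotomy n (2 * g) with hn | hn | hn
    · rcases le_or_gt n g with hng | hng
      · rw [hPf n hng, hQf n hng]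
        rcases Nat.eq_zero_or_pos n with rfl | hn0
        · simp only [Nat.sub_zero, htop]
        · rw [hco (2 * g - n) (by omega) (by omega)]
      · exact hco n (le_of_lt hng) hn
    · rw [hn]; exact htop
    · rw [Polynomial.coeff_eq_zero_of_natDegree_lt (hPd ▸ hn),
        Polynomial.coeff_eq_zero_of_natDegree_lt (hQd ▸ hn)]
  have hsub : φ '' S ⊆ ↑T := by
    rintro _ ⟨P, hP, rfl⟩; exact hmaps P hP
  have hfin1 : (φ '' S).Finite := Set.Finite.subset T.finite_toSet hsub
  have hfin : S.Finite := Set.Finite.of_finite_image hfin1 hinj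
  refine ⟨hfin, ?_⟩
  have h1 : S.ncard = (φ '' S).ncard := (Set.ncard_image_of_injOn hinj).symm
  have h2 : (φ '' S).ncard ≤ T.card := by
    rw [← Set.ncard_coe_finset]
    exact Set.ncard_le_ncard hsub T.finite_toSet
  have h3 : (T.card : ℝ) ≤ ∏ i : Fin g,
      (2 * (Nat.choose (2 * g) (i + 1) : ℝ) * Real.sqrt p ^ ((i : ℕ) + 1) + 1) := by
    rw [hT, Fintype.card_piFinset]
    push_cast
    refine Finset.prod_le_prod (fun i _ => by positivity) ?_
    intro i _
    rw [Int.card_Icc]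
    have hb := hBnn ((i : ℕ) + 1)
    have hfl : ((B ((i : ℕ) + 1) : ℤ) : ℝ) ≤
        (Nat.choose (2 * g) ((i : ℕ) + 1) : ℝ) * Real.sqrt p ^ ((i : ℕ) + 1) :=
      Int.floor_le _
    have : (B ((i:ℕ)+1) + 1 - -B ((i:ℕ)+1)).toNat = (2 * B ((i:ℕ)+1) + 1).toNat := by
      congr 1; ring
    rw [this]
    have hnn : (0:ℤ) ≤ 2 * B ((i:ℕ)+1) + 1 := by omega
    have h4 : ((2 * B ((i:ℕ)+1) + 1).toNat : ℝ) = 2 * ((B ((i:ℕ)+1) : ℤ) : ℝ) + 1 := by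
      rw [← Int.cast_natCast, Int.toNat_of_nonneg hnn]
      push_cast; ring
    rw [h4]
    linarith
  have h5 : ∏ m ∈ Finset.Icc 1 g, (2 * (Nat.choose (2 * g) m : ℝ) * Real.sqrt p ^ m + 1)
      = ∏ i : Fin g, (2 * (Nat.choose (2 * g) (i + 1) : ℝ) * Real.sqrt p ^ ((i : ℕ) + 1) + 1) := by
    rw [← Finset.Ico_add_one_right_eq_Icc, Finset.prod_Ico_eq_prod_range, ← Finset.prod_range fun i =>
      (2 * (Nat.choose (2 * g) (i + 1) : ℝ) * Real.sqrt p ^ (i + 1) + 1)]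
    simp [add_comm]
  rw [h5]
  calc (S.ncard : ℝ) = ((φ '' S).ncard : ℝ) := by rw [h1]
    _ ≤ (T.card : ℝ) := by exact_mod_cast h2
    _ ≤ _ := h3
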